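/- Let M_{C₁} = (U₁, I₁) and M_{C₂} = (U₂, I₂) be rough matroids based on coverings C₁ of U₁ and C₂ of U₂, with U₁ ∩ U₂ = ∅. Then their direct sum (U₁ ∪ U₂, I), where I = {I' ∪ I'' : I' ∈ I₁, I'' ∈ I₂}, is a rough matroid based on the covering C₁ ∪ C₂ of U₁ ∪ U₂. -/
import Mathlib


variable {α : Type*}

/-- `C` is a covering of `U`: every member is nonempty and their union is `U`. -/
def IsCovering (U : Set α) (C : Set (Set α)) : Prop :=
  (∀ K ∈ C, K.Nonempty) ∧ ⋃₀ C = U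

/-- The neighborhood of `x`: intersection of all members of `C` containing `x`. -/
def nbhd (C : Set (Set α)) (x : α) : Set α :=
  ⋂₀ {K | K ∈ C ∧ x ∈ K}

/-- `X` is definable w.r.t. `C` if it is the union of the neighborhoods of its points. -/
def Definable (C : Set (Set α)) (X : Set α) : Prop :=
  X = ⋃ x ∈ X, nbhd C x

/-- The family of all definable subsets of `U` w.r.t. `C`. -/
def DefinableSets (U : Set α) (C : Set (Set α)) : Set (Set α) :=
  {X | X ⊆ U ∧ Definable C X}

/-- Covering-based lower approximation. -/
def lowerApprox (U : Set α) (C : Set (Set α)) (X : Set α) : Set α :=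
  {x ∈ U | nbhd C x ⊆ X}

/-- Covering-based upper approximation. -/
def upperApprox (U : Set α) (C : Set (Set α)) (X : Set α) : Set α :=
  {x ∈ U | (nbhd C x ∩ X).Nonempty}

/-- Rough matroid based on a covering `C` of `U`. -/
def RoughMatroid (U : Set α) (C : Set (Set α)) (I : Set (Set α)) : Prop :=
  I ⊆ DefinableSets U C ∧
  ∅ ∈ I ∧
  (∀ I₀ ∈ I, ∀ I', I' ⊆ I₀ → I' ∈ DefinableSets U C → I' ∈ I) ∧
  (∀ I₁ ∈ I, ∀ I₂ ∈ I, I₁.ncard < I₂.ncard →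
    ∃ I₀ ∈ I, I₁ ⊂ I₀ ∧ I₀ ⊆ I₁ ∪ I₂)

/-- Matroid independence axioms (I1)-(I3). -/
def MatroidInd (I : Set (Set α)) : Prop :=
  ∅ ∈ I ∧
  (∀ X ∈ I, ∀ Y, Y ⊆ X → Y ∈ I) ∧
  (∀ I₁ ∈ I, ∀ I₂ ∈ I, I₁.ncard < I₂.ncard →
    ∃ e ∈ I₂ \ I₁, insert e I₁ ∈ I)

lemma mem_covering_subset {U : Set α} {C : Set (Set α)} (hC : IsCovering U C)
    {K : Set α} (hK : K ∈ C) : K ⊆ U := by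
  rw [← hC.2]; exact Set.subset_sUnion_of_mem hK

lemma self_mem_nbhd (C : Set (Set α)) (x : α) : x ∈ nbhd C x := by
  intro K hK; exact hK.2

lemma nbhd_subset_of_covering {U : Set α} {C : Set (Set α)} (hC : IsCovering U C)
    {x : α} (hx : x ∈ U) : nbhd C x ⊆ U := by
  rw [← hC.2] at hx
  obtain ⟨K, hK, hxK⟩ := hx
  exact (Set.sInter_subset_of_mem (show K ∈ {K | K ∈ C ∧ x ∈ K} from ⟨hK, hxK⟩)).trans
    (mem_covering_subset hC hK)

lemma nbhd_union_left {U₁ U₂ : Set α} {C₁ C₂ : Set (Set α)}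
    (hdisj : Disjoint U₁ U₂) (hC₂ : IsCovering U₂ C₂) {x : α} (hx : x ∈ U₁) :
    nbhd (C₁ ∪ C₂) x = nbhd C₁ x := by
  have hset : {K | K ∈ C₁ ∪ C₂ ∧ x ∈ K} = {K | K ∈ C₁ ∧ x ∈ K} := by
    ext K
    simp only [Set.mem_setOf_eq, Set.mem_union]
    constructor
    · rintro ⟨hK | hK, hxK⟩
      · exact ⟨hK, hxK⟩
      · exact absurd hx (Set.disjoint_right.mp hdisj (mem_covering_subset hC₂ hK hxK))
    · rintro ⟨hK, hxK⟩; exact ⟨Or.inl hK, hxK⟩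
  unfold nbhd
  rw [hset]

lemma definable_union {U₁ U₂ : Set α} {C₁ C₂ : Set (Set α)}
    (hdisj : Disjoint U₁ U₂) (hC₁ : IsCovering U₁ C₁) (hC₂ : IsCovering U₂ C₂)
    {X Y : Set α} (hX : X ∈ DefinableSets U₁ C₁) (hY : Y ∈ DefinableSets U₂ C₂) :
    X ∪ Y ∈ DefinableSets (U₁ ∪ U₂) (C₁ ∪ C₂) := by
  obtain ⟨hXU, hXd⟩ := hX
  obtain ⟨hYU, hYd⟩ := hY
  refine ⟨Set.union_subset_union hXU hYU, ?_⟩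
  unfold Definable
  apply Set.Subset.antisymm
  · intro x hx
    rcases hx with hx | hx
    · exact Set.mem_biUnion (Or.inl hx) (self_mem_nbhd _ x)
    · exact Set.mem_biUnion (Or.inr hx) (self_mem_nbhd _ x)
  · intro y hy
    obtain ⟨x, hx, hyx⟩ := Set.mem_iUnion₂.1 hy
    rcases hx with hx | hx
    · rw [nbhd_union_left hdisj hC₂ (hXU hx)] at hyx
      left; rw [hXd]; exact Set.mem_biUnion hx hyx
    · rw [Set.union_comm C₁ C₂, nbhd_union_left hdisj.symm hC₁ (hYU hx)] at hyx
      right; rw [hYd]; exact Set.mem_biUnion hx hyx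

lemma definable_restrict {U₁ U₂ : Set α} {C₁ C₂ : Set (Set α)}
    (hdisj : Disjoint U₁ U₂) (hC₁ : IsCovering U₁ C₁) (hC₂ : IsCovering U₂ C₂)
    {X : Set α} (hX : X ∈ DefinableSets (U₁ ∪ U₂) (C₁ ∪ C₂)) :
    X ∩ U₁ ∈ DefinableSets U₁ C₁ := by
  obtain ⟨hXU, hXd⟩ := hX
  refine ⟨Set.inter_subset_right, ?_⟩
  unfold Definable
  apply Set.Subset.antisymm
  · intro x hx
    exact Set.mem_biUnion hx (self_mem_nbhd _ x)
  · intro y hy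
    obtain ⟨x, hx, hyx⟩ := Set.mem_iUnion₂.1 hy
    have hnb : nbhd (C₁ ∪ C₂) x = nbhd C₁ x := nbhd_union_left hdisj hC₂ hx.2
    constructor
    · rw [hXd]
      refine Set.mem_biUnion hx.1 ?_
      rw [hnb]; exact hyx
    · exact nbhd_subset_of_covering hC₁ hx.2 hyx

theorem directSum_roughMatroid {U₁ U₂ : Set α} {C₁ C₂ : Set (Set α)}
    {I₁ I₂ : Set (Set α)}
    (hU₁ : U₁.Finite) (hU₂ : U₂.Finite) (hne₁ : U₁.Nonempty) (hne₂ : U₂.Nonempty)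
    (hdisj : Disjoint U₁ U₂)
    (hC₁ : IsCovering U₁ C₁) (hC₂ : IsCovering U₂ C₂)
    (hM₁ : RoughMatroid U₁ C₁ I₁) (hM₂ : RoughMatroid U₂ C₂ I₂) :
    RoughMatroid (U₁ ∪ U₂) (C₁ ∪ C₂)
      {X | ∃ I' ∈ I₁, ∃ I'' ∈ I₂, X = I' ∪ I''} := by
  obtain ⟨hD₁, hE₁, hH₁, hX₁⟩ := hM₁
  obtain ⟨hD₂, hE₂, hH₂, hX₂⟩ := hM₂
  have subU₁ : ∀ A ∈ I₁, A ⊆ U₁ := fun A hA => (hD₁ hA).1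
  have subU₂ : ∀ B ∈ I₂, B ⊆ U₂ := fun B hB => (hD₂ hB).1
  refine ⟨?_, ?_, ?_, ?_⟩
  · rintro X ⟨A, hA, B, hB, rfl⟩
    exact definable_union hdisj hC₁ hC₂ (hD₁ hA) (hD₂ hB)
  · exact ⟨∅, hE₁, ∅, hE₂, (Set.union_empty ∅).symm⟩
  · rintro X ⟨A, hA, B, hB, rfl⟩ I' hsub hdef
    have h₁ : I' ∩ U₁ ∈ I₁ := by
      apply hH₁ A hA _ _ (definable_restrict hdisj hC₁ hC₂ hdef)
      rintro x ⟨hxI, hxU⟩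
      rcases hsub hxI with hx | hx
      · exact hx
      · exact absurd hxU (Set.disjoint_right.mp hdisj (subU₂ B hB hx))
    have h₂ : I' ∩ U₂ ∈ I₂ := by
      rw [Set.union_comm U₁ U₂, Set.union_comm C₁ C₂] at hdef
      apply hH₂ B hB _ _ (definable_restrict hdisj.symm hC₂ hC₁ hdef)
      rintro x ⟨hxI, hxU⟩
      rcases hsub hxI with hx | hx
      · exact absurd hxU (Set.disjoint_right.mp hdisj.symm (subU₁ A hA hx))
      · exact hx
    refine ⟨I' ∩ U₁, h₁, I' ∩ U₂, h₂, ?_⟩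
    rw [← Set.inter_union_distrib_left]
    exact (Set.inter_eq_left.mpr (hdef.1)).symm
  · rintro X ⟨A₁, hA₁, B₁, hB₁, rfl⟩ Y ⟨A₂, hA₂, B₂, hB₂, rfl⟩ hlt
    have fin : ∀ {S : Set α} {U : Set α}, U.Finite → S ⊆ U → S.Finite :=
      fun h hs => h.subset hs
    have dAB : ∀ {A B : Set α}, A ⊆ U₁ → B ⊆ U₂ → Disjoint A B :=
      fun hA hB => hdisj.mono hA hB
    have card₁ : (A₁ ∪ B₁).ncard = A₁.ncard + B₁.ncard :=
      Set.ncard_union_eq (dAB (subU₁ _ hA₁) (subU₂ _ hB₁))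
        (fin hU₁ (subU₁ _ hA₁)) (fin hU₂ (subU₂ _ hB₁))
    have card₂ : (A₂ ∪ B₂).ncard = A₂.ncard + B₂.ncard :=
      Set.ncard_union_eq (dAB (subU₁ _ hA₂) (subU₂ _ hB₂))
        (fin hU₁ (subU₁ _ hA₂)) (fin hU₂ (subU₂ _ hB₂))
    rw [card₁, card₂] at hlt
    rcases lt_or_ge A₁.ncard A₂.ncard with h | h
    · obtain ⟨A₀, hA₀, hss, hsub⟩ := hX₁ A₁ hA₁ A₂ hA₂ h
      refine ⟨A₀ ∪ B₁, ⟨A₀, hA₀, B₁, hB₁, rfl⟩, ?_, ?_⟩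
      · constructor
        · exact Set.union_subset_union_left B₁ hss.1
        · intro hle
          obtain ⟨e, heA₀, heA₁⟩ := Set.exists_of_ssubset hss
          have : e ∈ A₁ ∪ B₁ := hle (Or.inl heA₀)
          rcases this with h | h
          · exact heA₁ h
          · exact Set.disjoint_right.mp hdisj (subU₂ _ hB₁ h) (subU₁ _ hA₀ heA₀)
      · intro x hx
        rcases hx with hx | hx
        · rcases hsub hx with h | h
          · exact Or.inl (Or.inl h)
          · exact Or.inr (Or.inl h)
        · exact Or.inl (Or.inr hx)
    · have hB : B₁.ncard < B₂.ncard := by omega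
      obtain ⟨B₀, hB₀, hss, hsub⟩ := hX₂ B₁ hB₁ B₂ hB₂ hB
      refine ⟨A₁ ∪ B₀, ⟨A₁, hA₁, B₀, hB₀, rfl⟩, ?_, ?_⟩
      · constructor
        · exact Set.union_subset_union_right A₁ hss.1
        · intro hle
          obtain ⟨e, heB₀, heB₁⟩ := Set.exists_of_ssubset hss
          have : e ∈ A₁ ∪ B₁ := hle (Or.inr heB₀)
          rcases this with h | h
          · exact Set.disjoint_right.mp hdisj.symm (subU₁ _ hA₁ h) (subU₂ _ hB₀ heB₀)
          · exact heB₁ h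
      · intro x hx
        rcases hx with hx | hx
        · exact Or.inl (Or.inl hx)
        · rcases hsub hx with h | h
          · exact Or.inl (Or.inr h)
          · exact Or.inr (Or.inr h)
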